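/- Let α, β, k₀, k₁, k₂, k₃ be nonnegative integers with k₀ ≤ α and l := k₁ + k₂ + k₃ ≤ β. If α·k₂ = k₀·(k₂ + k₃), then N(α,β;k₀,k₁,k₂,k₃) = N(α,β;α−k₀, β−l, k₃, k₂); that is, the number of ℤ₂ℤ₈-additive codes of type (α,β;k₀,k₁,k₂,k₃) equals the number of codes whose type equals the dual type (α,β;α−k₀,β−l,k₃,k₂). -/
import Mathlib

open Finset

/-- The Mixed Generalized Gaussian Number `N(α,β;k₀,k₁,k₂,k₃)`. -/
def MGN (a b k₀ k₁ k₂ k₃ : ℕ) : ℚ :=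
  ((∏ i ∈ range k₀, ((2 ^ a - 2 ^ i : ℚ) * 2 ^ b)) *
   (∏ i ∈ range k₁, ((8 ^ b - 4 ^ b * 2 ^ i : ℚ) * 2 ^ a)) *
   (∏ i ∈ range k₂, ((4 ^ b - 2 ^ (b + k₁ + i) : ℚ) * 2 ^ a)) *
   (∏ i ∈ range k₃, (2 ^ b - 2 ^ (k₁ + k₂ + i) : ℚ))) /
  ((∏ i ∈ range k₀, (2 ^ (k₀ + k₁ + k₂ + k₃) - 2 ^ (k₁ + k₂ + k₃ + i) : ℚ)) *
   (∏ i ∈ range k₁, ((8 ^ k₁ - 4 ^ k₁ * 2 ^ i : ℚ) * 2 ^ (k₀ + 2 * k₂ + k₃))) *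
   (∏ i ∈ range k₂, ((4 ^ k₂ - 2 ^ (k₂ + i) : ℚ) * 2 ^ (k₀ + 2 * k₁ + k₃))) *
   (∏ i ∈ range k₃, (2 ^ (k₁ + k₂ + k₃) - 2 ^ (k₁ + k₂ + i) : ℚ)))

/-- Auxiliary product `∏ i < k, (2^a - 2^i)`. -/
def Pp (a k : ℕ) : ℚ := ∏ i ∈ range k, (2 ^ a - 2 ^ i)

lemma Pp_pos {a k : ℕ} (h : k ≤ a) : 0 < Pp a k := by
  apply Finset.prod_pos
  intro i hi
  have hia : i < a := lt_of_lt_of_le (mem_range.mp hi) h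
  have : (2:ℚ) ^ i < 2 ^ a := by
    exact pow_lt_pow_right₀ (by norm_num) hia
  linarith

lemma Pp_kk_pos (k : ℕ) : 0 < Pp k k := Pp_pos le_rfl

lemma prod_mul_pow (k d : ℕ) (f g : ℕ → ℚ) (h : ∀ i, f i = g i * 2 ^ d) :
    ∏ i ∈ range k, f i = (∏ i ∈ range k, g i) * 2 ^ (d * k) := by
  calc ∏ i ∈ range k, f i = ∏ i ∈ range k, (g i * 2 ^ d) :=
        Finset.prod_congr rfl fun i _ => h i
    _ = (∏ i ∈ range k, g i) * 2 ^ (d * k) := by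
        rw [Finset.prod_mul_distrib, Finset.prod_const, Finset.card_range, ← pow_mul]

lemma Pp_split (u m n : ℕ) :
    Pp (m + u) (m + n) = Pp (m + u) m * (2 ^ (m * n) * Pp u n) := by
  unfold Pp
  rw [Finset.prod_range_add]
  congr 1
  calc ∏ i ∈ range n, ((2:ℚ) ^ (m + u) - 2 ^ (m + i))
      = ∏ i ∈ range n, ((2:ℚ) ^ m * (2 ^ u - 2 ^ i)) := by
        refine Finset.prod_congr rfl fun i _ => ?_
        rw [pow_add, pow_add]; ring
    _ = 2 ^ (m * n) * Pp u n := by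
        rw [Finset.prod_mul_distrib, Finset.prod_const, Finset.card_range, ← pow_mul]; rfl

lemma MGN_eq (a b k₀ k₁ k₂ k₃ : ℕ) :
    MGN a b k₀ k₁ k₂ k₃ =
      (2 ^ (b * k₀ + (2 * b + a) * k₁ + (b + a) * k₂) * (Pp a k₀ * Pp b (k₁ + k₂ + k₃))) /
      (2 ^ ((k₁ + k₂ + k₃) * k₀ + (2 * k₁ + k₀ + 2 * k₂ + k₃) * k₁ +
            (k₂ + k₀ + 2 * k₁ + k₃) * k₂ + (k₁ + k₂) * k₃) *
        (Pp k₀ k₀ * Pp k₁ k₁ * Pp k₂ k₂ * Pp k₃ k₃)) := by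
  have e1 : ∏ i ∈ range k₀, ((2 ^ a - 2 ^ i : ℚ) * 2 ^ b) = Pp a k₀ * 2 ^ (b * k₀) :=
    prod_mul_pow _ _ _ _ fun i => rfl
  have e2 : ∏ i ∈ range k₁, ((8 ^ b - 4 ^ b * 2 ^ i : ℚ) * 2 ^ a) =
      (∏ i ∈ range k₁, ((2:ℚ) ^ b - 2 ^ i)) * 2 ^ ((2 * b + a) * k₁) :=
    prod_mul_pow _ _ _ _ fun i => by
      simp only [show (8:ℚ) = 2 * 2 * 2 from by norm_num, show (4:ℚ) = 2 * 2 from by norm_num, mul_pow, Nat.two_mul, pow_add]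
      ring
  have e3 : ∏ i ∈ range k₂, ((4 ^ b - 2 ^ (b + k₁ + i) : ℚ) * 2 ^ a) =
      (∏ i ∈ range k₂, ((2:ℚ) ^ b - 2 ^ (k₁ + i))) * 2 ^ ((b + a) * k₂) :=
    prod_mul_pow _ _ _ _ fun i => by
      simp only [show (8:ℚ) = 2 * 2 * 2 from by norm_num, show (4:ℚ) = 2 * 2 from by norm_num, mul_pow, Nat.two_mul, pow_add]
      ring
  have e4 : ∏ i ∈ range k₀, ((2:ℚ) ^ (k₀ + k₁ + k₂ + k₃) - 2 ^ (k₁ + k₂ + k₃ + i)) =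
      Pp k₀ k₀ * 2 ^ ((k₁ + k₂ + k₃) * k₀) :=
    prod_mul_pow _ _ _ _ fun i => by
      simp only [show (8:ℚ) = 2 * 2 * 2 from by norm_num, show (4:ℚ) = 2 * 2 from by norm_num, mul_pow, Nat.two_mul, pow_add]
      ring
  have e5 : ∏ i ∈ range k₁, ((8 ^ k₁ - 4 ^ k₁ * 2 ^ i : ℚ) * 2 ^ (k₀ + 2 * k₂ + k₃)) =
      Pp k₁ k₁ * 2 ^ ((2 * k₁ + k₀ + 2 * k₂ + k₃) * k₁) :=
    prod_mul_pow _ _ _ _ fun i => by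
      simp only [show (8:ℚ) = 2 * 2 * 2 from by norm_num, show (4:ℚ) = 2 * 2 from by norm_num, mul_pow, Nat.two_mul, pow_add]
      ring
  have e6 : ∏ i ∈ range k₂, ((4 ^ k₂ - 2 ^ (k₂ + i) : ℚ) * 2 ^ (k₀ + 2 * k₁ + k₃)) =
      Pp k₂ k₂ * 2 ^ ((k₂ + k₀ + 2 * k₁ + k₃) * k₂) :=
    prod_mul_pow _ _ _ _ fun i => by
      simp only [show (8:ℚ) = 2 * 2 * 2 from by norm_num, show (4:ℚ) = 2 * 2 from by norm_num, mul_pow, Nat.two_mul, pow_add]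
      ring
  have e7 : ∏ i ∈ range k₃, ((2:ℚ) ^ (k₁ + k₂ + k₃) - 2 ^ (k₁ + k₂ + i)) =
      Pp k₃ k₃ * 2 ^ ((k₁ + k₂) * k₃) :=
    prod_mul_pow _ _ _ _ fun i => by
      simp only [show (8:ℚ) = 2 * 2 * 2 from by norm_num, show (4:ℚ) = 2 * 2 from by norm_num, mul_pow, Nat.two_mul, pow_add]
      ring
  have ecomb : Pp b (k₁ + k₂ + k₃) =
      (∏ i ∈ range k₁, ((2:ℚ) ^ b - 2 ^ i)) *
      (∏ i ∈ range k₂, ((2:ℚ) ^ b - 2 ^ (k₁ + i))) *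
      (∏ i ∈ range k₃, ((2:ℚ) ^ b - 2 ^ (k₁ + k₂ + i))) := by
    unfold Pp
    rw [Finset.prod_range_add, Finset.prod_range_add]
  unfold MGN
  rw [e1, e2, e3, e4, e5, e6, e7, ecomb]
  congr 1 <;> ring

theorem MGN_dual_type_eq (α β k₀ k₁ k₂ k₃ : ℕ) (h₀ : k₀ ≤ α) (h : k₁ + k₂ + k₃ ≤ β)
    (hc : α * k₂ = k₀ * (k₂ + k₃)) :
    MGN α β k₀ k₁ k₂ k₃ = MGN α β (α - k₀) (β - (k₁ + k₂ + k₃)) k₃ k₂ := by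
  obtain ⟨s, rfl⟩ : ∃ s, α = k₀ + s := ⟨α - k₀, by omega⟩
  obtain ⟨t, rfl⟩ : ∃ t, β = k₁ + k₂ + k₃ + t := ⟨β - (k₁ + k₂ + k₃), by omega⟩
  have hs : s * k₂ = k₀ * k₃ := by
    rw [add_mul, Nat.mul_add] at hc
    exact Nat.add_left_cancel hc
  rw [show k₀ + s - k₀ = s by omega, show k₁ + k₂ + k₃ + t - (k₁ + k₂ + k₃) = t by omega,
    MGN_eq, MGN_eq]
  rw [div_eq_div_iff]
  · -- cross-multiplied equality
    have H1 : Pp (k₀ + s) k₀ * (2 ^ (k₀ * s) * Pp s s) = Pp (k₀ + s) (k₀ + s) :=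
      (Pp_split s k₀ s).symm
    have H2 : Pp (k₀ + s) s * (2 ^ (s * k₀) * Pp k₀ k₀) = Pp (k₀ + s) (k₀ + s) := by
      have h2 := (Pp_split k₀ s k₀).symm
      rwa [add_comm s k₀] at h2
    have H3 : Pp (k₁ + k₂ + k₃ + t) (k₁ + k₂ + k₃) *
        (2 ^ ((k₁ + k₂ + k₃) * t) * Pp t t) =
        Pp (k₁ + k₂ + k₃ + t) (k₁ + k₂ + k₃ + t) :=
      (Pp_split t (k₁ + k₂ + k₃) t).symm
    have H4 : Pp (k₁ + k₂ + k₃ + t) (t + k₃ + k₂) *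
        (2 ^ ((t + k₃ + k₂) * k₁) * Pp k₁ k₁) =
        Pp (k₁ + k₂ + k₃ + t) (k₁ + k₂ + k₃ + t) := by
      have h4 := (Pp_split k₁ (t + k₃ + k₂) k₁).symm
      rwa [show t + k₃ + k₂ + k₁ = k₁ + k₂ + k₃ + t by omega] at h4
    have key :
        ((k₁ + k₂ + k₃ + t) * k₀ + (2 * (k₁ + k₂ + k₃ + t) + (k₀ + s)) * k₁ +
          ((k₁ + k₂ + k₃ + t) + (k₀ + s)) * k₂) +
        ((t + k₃ + k₂) * s + (2 * t + s + 2 * k₃ + k₂) * t +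
          (k₃ + s + 2 * t + k₂) * k₃ + (t + k₃) * k₂) +
        (t + k₃ + k₂) * k₁ =
        ((k₁ + k₂ + k₃ + t) * s + (2 * (k₁ + k₂ + k₃ + t) + (k₀ + s)) * t +
          ((k₁ + k₂ + k₃ + t) + (k₀ + s)) * k₃) +
        ((k₁ + k₂ + k₃) * k₀ + (2 * k₁ + k₀ + 2 * k₂ + k₃) * k₁ +
          (k₂ + k₀ + 2 * k₁ + k₃) * k₂ + (k₁ + k₂) * k₃) +
        (k₁ + k₂ + k₃) * t := by
      have hsz : (s : ℤ) * k₂ = (k₀ : ℤ) * k₃ := by exact_mod_cast hs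
      zify
      linear_combination hsz
    apply mul_left_cancel₀ (a := (2:ℚ) ^ (k₀ * s) * 2 ^ ((k₁ + k₂ + k₃) * t) *
      2 ^ ((t + k₃ + k₂) * k₁)) (by positivity)
    calc (2:ℚ) ^ (k₀ * s) * 2 ^ ((k₁ + k₂ + k₃) * t) * 2 ^ ((t + k₃ + k₂) * k₁) *
          (2 ^ ((k₁ + k₂ + k₃ + t) * k₀ + (2 * (k₁ + k₂ + k₃ + t) + (k₀ + s)) * k₁ +
              ((k₁ + k₂ + k₃ + t) + (k₀ + s)) * k₂) *
            (Pp (k₀ + s) k₀ * Pp (k₁ + k₂ + k₃ + t) (k₁ + k₂ + k₃)) *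
          (2 ^ ((t + k₃ + k₂) * s + (2 * t + s + 2 * k₃ + k₂) * t +
              (k₃ + s + 2 * t + k₂) * k₃ + (t + k₃) * k₂) *
            (Pp s s * Pp t t * Pp k₃ k₃ * Pp k₂ k₂)))
        = 2 ^ (((k₁ + k₂ + k₃ + t) * k₀ + (2 * (k₁ + k₂ + k₃ + t) + (k₀ + s)) * k₁ +
              ((k₁ + k₂ + k₃ + t) + (k₀ + s)) * k₂) +
            ((t + k₃ + k₂) * s + (2 * t + s + 2 * k₃ + k₂) * t +
              (k₃ + s + 2 * t + k₂) * k₃ + (t + k₃) * k₂) +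
            (t + k₃ + k₂) * k₁) *
          (Pp (k₀ + s) (k₀ + s) * Pp (k₁ + k₂ + k₃ + t) (k₁ + k₂ + k₃ + t) *
            Pp k₂ k₂ * Pp k₃ k₃) := by
          rw [← H1, ← H3]; ring
      _ = 2 ^ (((k₁ + k₂ + k₃ + t) * s + (2 * (k₁ + k₂ + k₃ + t) + (k₀ + s)) * t +
              ((k₁ + k₂ + k₃ + t) + (k₀ + s)) * k₃) +
            ((k₁ + k₂ + k₃) * k₀ + (2 * k₁ + k₀ + 2 * k₂ + k₃) * k₁ +
              (k₂ + k₀ + 2 * k₁ + k₃) * k₂ + (k₁ + k₂) * k₃) +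
            (k₁ + k₂ + k₃) * t) *
          (Pp (k₀ + s) (k₀ + s) * Pp (k₁ + k₂ + k₃ + t) (k₁ + k₂ + k₃ + t) *
            Pp k₂ k₂ * Pp k₃ k₃) := by rw [key]
      _ = 2 ^ (k₀ * s) * 2 ^ ((k₁ + k₂ + k₃) * t) * 2 ^ ((t + k₃ + k₂) * k₁) *
          (2 ^ ((k₁ + k₂ + k₃ + t) * s + (2 * (k₁ + k₂ + k₃ + t) + (k₀ + s)) * t +
              ((k₁ + k₂ + k₃ + t) + (k₀ + s)) * k₃) *
            (Pp (k₀ + s) s * Pp (k₁ + k₂ + k₃ + t) (t + k₃ + k₂)) *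
          (2 ^ ((k₁ + k₂ + k₃) * k₀ + (2 * k₁ + k₀ + 2 * k₂ + k₃) * k₁ +
              (k₂ + k₀ + 2 * k₁ + k₃) * k₂ + (k₁ + k₂) * k₃) *
            (Pp k₀ k₀ * Pp k₁ k₁ * Pp k₂ k₂ * Pp k₃ k₃))) := by
          rw [← H2, ← H4]; ring
  · exact ne_of_gt (by
      have := Pp_kk_pos k₀; have := Pp_kk_pos k₁; have := Pp_kk_pos k₂; have := Pp_kk_pos k₃
      positivity)
  · exact ne_of_gt (by
      have := Pp_kk_pos s; have := Pp_kk_pos t; have := Pp_kk_pos k₂; have := Pp_kk_pos k₃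
      positivity)
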